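/- Let n ≥ 2 and a ≥ 0 be natural numbers, let e₀ = Pi.single 0 1 : Fin n → ℝ, and let Z be the ℝ-submodule of MvPolynomial (Fin n) ℝ consisting of those harmonic polynomials p homogeneous of degree a such that for every A ∈ Matrix.orthogonalGroup (Fin n) ℝ with A.mulVec e₀ = e₀ and every x : Fin n → ℝ, one has MvPolynomial.eval (A.mulVec x) p = MvPolynomial.eval x p. Then Module.finrank ℝ Z = 1. -/

import Mathlib

open MvPolynomial

/-- The space of zonal harmonics: harmonic polynomials, homogeneous of degree `a`, invariant
under the orthogonal transformations fixing the vector `e`. -/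
noncomputable def zonalHarmonics (n a : ℕ) (e : Fin n → ℝ) :
    Submodule ℝ (MvPolynomial (Fin n) ℝ) where
  carrier := {p | p ∈ homogeneousSubmodule (Fin n) ℝ a ∧
    (∑ i, pderiv i (pderiv i p)) = 0 ∧
    ∀ A ∈ Matrix.orthogonalGroup (Fin n) ℝ, A.mulVec e = e →
      ∀ x : Fin n → ℝ, MvPolynomial.eval (A.mulVec x) p = MvPolynomial.eval x p}
  zero_mem' := by
    refine ⟨Submodule.zero_mem _, by simp, ?_⟩
    intro A hA hAe x
    simp
  add_mem' := by
    rintro p q ⟨hp1, hp2, hp3⟩ ⟨hq1, hq2, hq3⟩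
    refine ⟨Submodule.add_mem _ hp1 hq1, ?_, ?_⟩
    · simp only [map_add, Finset.sum_add_distrib, hp2, hq2, add_zero]
    · intro A hA hAe x
      simp only [map_add, hp3 A hA hAe x, hq3 A hA hAe x]
  smul_mem' := by
    rintro c p ⟨hp1, hp2, hp3⟩
    refine ⟨Submodule.smul_mem _ c hp1, ?_, ?_⟩
    · have h : ∀ i : Fin n, pderiv i (pderiv i (c • p)) = c • pderiv i (pderiv i p) := by
        intro i
        rw [Derivation.map_smul, Derivation.map_smul]
      rw [Finset.sum_congr rfl (fun i _ => h i), ← Finset.smul_sum, hp2, smul_zero]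
    · intro A hA hAe x
      simp only [MvPolynomial.smul_eval, hp3 A hA hAe x]


open Finset Matrix

namespace ZonalAux


variable {m : ℕ}

noncomputable def S (m : ℕ) : MvPolynomial (Fin (m+2)) ℝ :=
  ∑ i ∈ Finset.univ.erase 0, X i ^ 2

lemma eval_S (x : Fin (m+2) → ℝ) : eval x (S m) = ∑ i ∈ Finset.univ.erase 0, (x i)^2 := by
  simp [S]

lemma eval_S' (x : Fin (m+2) → ℝ) : eval x (S m) = (∑ i, (x i)^2) - (x 0)^2 := by
  rw [eval_S, Finset.sum_erase_eq_sub (mem_univ _)]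

lemma eval_S_nonneg (x : Fin (m+2) → ℝ) : 0 ≤ eval x (S m) := by
  rw [eval_S]; positivity

lemma S_homog : (S m).IsHomogeneous 2 :=
  IsHomogeneous.sum _ _ _ fun i _ => (isHomogeneous_X _ _).pow 2

lemma natCast_eq_C (k : ℕ) : ((k : MvPolynomial (Fin (m+2)) ℝ)) = C (k : ℝ) :=
  (_root_.map_natCast C k).symm

lemma pderiv_S_zero : pderiv (0 : Fin (m+2)) (S m) = 0 := by
  unfold S
  rw [_root_.map_sum]
  refine Finset.sum_eq_zero fun i hi => ?_
  rw [pderiv_pow, pderiv_X_of_ne (Finset.ne_of_mem_erase hi)]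
  ring

lemma pderiv_S (j : Fin (m+2)) (hj : j ≠ 0) : pderiv j (S m) = C 2 * X j := by
  unfold S
  rw [_root_.map_sum]
  rw [Finset.sum_eq_single_of_mem j (Finset.mem_erase.2 ⟨hj, mem_univ _⟩)]
  · rw [pderiv_pow, pderiv_X_self, show (C (2:ℝ) : MvPolynomial (Fin (m+2)) ℝ) = 2 from
      _root_.map_ofNat _ 2]
    ring
  · intro i _ hij
    rw [pderiv_pow, pderiv_X_of_ne hij]
    ring

lemma pderiv_S_pow (j : Fin (m+2)) (hj : j ≠ 0) (k : ℕ) :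
    pderiv j (S m ^ k) = C (2*k : ℝ) * (S m ^ (k-1) * X j) := by
  rw [pderiv_pow, pderiv_S j hj, natCast_eq_C, _root_.map_mul, _root_.map_ofNat]
  push_cast
  ring

lemma Cmerge (a b c d : ℝ) (p : MvPolynomial (Fin (m+2)) ℝ) (h : a*b + a*c = d) :
    C a * (C b * p + C c * p) = C d * p := by
  subst h; rw [_root_.map_add, _root_.map_mul, _root_.map_mul]; ring

lemma Cmerge2 (a b d : ℝ) (p : MvPolynomial (Fin (m+2)) ℝ) (h : a*b = d) :
    C a * (C b * p) = C d * p := by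
  subst h; rw [_root_.map_mul]; ring

lemma lap_term (M k : ℕ) :
    ∑ j, pderiv j (pderiv j ((X 0 ^ M * S m ^ k : MvPolynomial (Fin (m+2)) ℝ))) =
      C ((M*(M-1) : ℕ) : ℝ) * (X 0 ^ (M-2) * S m ^ k)
      + C ((2*k*(2*k+m-1) : ℕ) : ℝ) * (X 0 ^ M * S m ^ (k-1)) := by
  rw [← Finset.sum_erase_add _ _ (mem_univ (0 : Fin (m+2)))]
  -- the j = 0 term
  have d1 : pderiv (0:Fin (m+2)) (X 0 ^ M * S m ^ k) = C (M:ℝ) * (X 0 ^ (M-1) * S m ^ k) := by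
    rw [pderiv_mul, pderiv_pow, pderiv_X_self, pderiv_pow, pderiv_S_zero, natCast_eq_C]
    ring
  have h0 : pderiv (0:Fin (m+2)) (pderiv (0:Fin (m+2)) (X 0 ^ M * S m ^ k)) =
      C ((M*(M-1) : ℕ) : ℝ) * (X 0 ^ (M-2) * S m ^ k) := by
    rw [d1, pderiv_C_mul, pderiv_mul, pderiv_pow, pderiv_X_self, pderiv_pow, pderiv_S_zero,
      natCast_eq_C, show M - 1 - 1 = M - 2 from by omega,
      show ((M*(M-1):ℕ):ℝ) = (M:ℝ)*((M-1:ℕ):ℝ) from by push_cast; ring, _root_.map_mul]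
    ring
  -- the j ≠ 0 terms
  have hj : ∀ j ∈ Finset.univ.erase (0 : Fin (m+2)),
      pderiv j (pderiv j (X 0 ^ M * S m ^ k)) =
      C (2*(k:ℝ)) * (C (2*((k-1:ℕ):ℝ)) * (X 0 ^ M * (S m ^ (k-2) * (X j * X j)))
        + X 0 ^ M * S m ^ (k-1)) := by
    intro j hj'
    have hjne : j ≠ 0 := Finset.ne_of_mem_erase hj'
    have hX0 : pderiv j ((X 0 : MvPolynomial (Fin (m+2)) ℝ) ^ M) = 0 := by
      rw [pderiv_pow, pderiv_X_of_ne (Ne.symm hjne)]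
      ring
    have e1 : pderiv j (X 0 ^ M * S m ^ k) = C (2*(k:ℝ)) * (X 0 ^ M * (S m ^ (k-1) * X j)) := by
      rw [pderiv_mul, hX0, pderiv_S_pow j hjne]
      ring
    rw [e1, pderiv_C_mul, pderiv_mul, hX0, pderiv_mul, pderiv_S_pow j hjne, pderiv_X_self,
      show k - 1 - 1 = k - 2 from by omega]
    ring
  rw [Finset.sum_congr rfl hj, h0]
  have hsum : ∑ j ∈ Finset.univ.erase (0 : Fin (m+2)),
      C (2*(k:ℝ)) * (C (2*((k-1:ℕ):ℝ)) * (X 0 ^ M * (S m ^ (k-2) * (X j * X j)))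
        + X 0 ^ M * S m ^ (k-1))
      = C (2*(k:ℝ)) * (C (2*((k-1:ℕ):ℝ)) * (X 0 ^ M * (S m ^ (k-2) * S m))
        + C ((m:ℝ)+1) * (X 0 ^ M * S m ^ (k-1))) := by
    rw [← Finset.mul_sum, Finset.sum_add_distrib, Finset.sum_const, ← Finset.mul_sum,
      ← Finset.mul_sum, ← Finset.mul_sum]
    have : ∑ j ∈ Finset.univ.erase (0 : Fin (m+2)), (X j * X j : MvPolynomial (Fin (m+2)) ℝ)
        = S m := by
      unfold S
      exact Finset.sum_congr rfl fun j _ => (sq (X j)).symm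
    rw [this]
    have hcard : (Finset.univ.erase (0 : Fin (m+2))).card = m + 1 := by
      rw [Finset.card_erase_of_mem (mem_univ _), Finset.card_univ, Fintype.card_fin]
      omega
    rw [hcard, nsmul_eq_mul, natCast_eq_C]
    push_cast
    ring
  rw [hsum]
  refine (add_comm _ _).trans ?_
  congr 1
  -- coefficient arithmetic, by cases on k
  clear hsum hj h0 d1
  match k with
  | 0 => simp
  | 1 =>
    rw [show (2*1*(2*1+m-1) : ℕ) = 2*(m+1) from by omega,
      show ((1:ℕ)-1) = 0 from rfl,
      show (2*(((0:ℕ)):ℝ)) = 0 from by norm_num, _root_.map_zero, zero_mul, zero_add]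
    exact Cmerge2 _ _ _ _ (by push_cast; ring)
  | (k+2) =>
    rw [show (k+2) - 1 = k+1 from rfl, show (k+2) - 2 = k from rfl, ← pow_succ,
      show (2*(k+2)*(2*(k+2)+m-1) : ℕ) = 2*(k+2)*(2*k+m+3) from by
        have h : 2*(k+2)+m-1 = 2*k+m+3 := by omega
        rw [h]]
    exact Cmerge _ _ _ _ _ (by push_cast; ring)

lemma lap_sum (a : ℕ) (d : ℕ → ℝ) (M : ℕ) (hM : a = 2*M ∨ a = 2*M+1) :
    ∑ j, pderiv j (pderiv j
        (∑ k ∈ Finset.range (M+1), C (d k) * (X 0 ^ (a-2*k) * S m ^ k))) =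
    ∑ k ∈ Finset.range M,
      C (d k * (((a-2*k)*((a-2*k)-1) : ℕ) : ℝ) + d (k+1) * (((2*k+2)*(2*k+m+1) : ℕ) : ℝ))
        * (X 0 ^ (a-2*k-2) * S m ^ k) := by
  have swap : ∑ j, pderiv j (pderiv j
        (∑ k ∈ Finset.range (M+1), C (d k) * (X 0 ^ (a-2*k) * S m ^ k))) =
      ∑ k ∈ Finset.range (M+1), C (d k) *
        (∑ j, pderiv j (pderiv j ((X 0 ^ (a-2*k) * S m ^ k : MvPolynomial (Fin (m+2)) ℝ)))) := by
    simp only [_root_.map_sum, pderiv_C_mul]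
    rw [Finset.sum_comm]
    exact Finset.sum_congr rfl fun k _ => (Finset.mul_sum _ _ _).symm
  rw [swap]
  have expand : ∀ k ∈ Finset.range (M+1), C (d k) *
        (∑ j, pderiv j (pderiv j ((X 0 ^ (a-2*k) * S m ^ k : MvPolynomial (Fin (m+2)) ℝ)))) =
      C (d k * (((a-2*k)*((a-2*k)-1) : ℕ) : ℝ)) * (X 0 ^ (a-2*k-2) * S m ^ k)
      + C (d k * ((2*k*(2*k+m-1) : ℕ) : ℝ)) * (X 0 ^ (a-2*k) * S m ^ (k-1)) := by
    intro k _
    rw [lap_term, _root_.map_mul, _root_.map_mul]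
    ring
  rw [Finset.sum_congr rfl expand, Finset.sum_add_distrib]
  -- first sum: last term vanishes
  rw [Finset.sum_range_succ]
  have hz1 : ((a-2*M)*((a-2*M)-1) : ℕ) = 0 := by
    have : a - 2*M = 0 ∨ a - 2*M = 1 := by omega
    rcases this with h | h <;> rw [h]
  rw [hz1, Nat.cast_zero, mul_zero, _root_.map_zero, zero_mul, add_zero]
  -- second sum: reindex
  rw [Finset.sum_range_succ', show (2*0*(2*0+m-1) : ℕ) = 0 from by simp,
    Nat.cast_zero, mul_zero, _root_.map_zero, zero_mul, add_zero]
  have reindex : ∀ k ∈ Finset.range M,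
      C (d (k+1) * ((2*(k+1)*(2*(k+1)+m-1) : ℕ) : ℝ)) *
          (X 0 ^ (a-2*(k+1)) * S m ^ (k+1-1)) =
      C (d (k+1) * (((2*k+2)*(2*k+m+1) : ℕ) : ℝ)) * (X 0 ^ (a-2*k-2) * S m ^ k) := by
    intro k _
    rw [show 2*(k+1)*(2*(k+1)+m-1) = (2*k+2)*(2*k+m+1) from by
        have h : 2*(k+1)+m-1 = 2*k+m+1 := by omega
        rw [h]; ring,
      show a-2*(k+1) = a-2*k-2 from by omega, show k+1-1 = k from rfl]
  rw [Finset.sum_congr rfl reindex, ← Finset.sum_add_distrib]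
  refine Finset.sum_congr rfl fun k _ => ?_
  rw [_root_.map_add]
  ring

/-- Coefficients of the zonal harmonic polynomial. -/
noncomputable def zc (m a : ℕ) : ℕ → ℝ
  | 0 => 1
  | (k+1) => -(((a-2*k)*((a-2*k)-1) : ℕ) : ℝ) / (((2*k+2)*(2*k+m+1) : ℕ) : ℝ) * zc m a k

lemma zc_rec (a k : ℕ) :
    zc m a k * (((a-2*k)*((a-2*k)-1) : ℕ) : ℝ)
      + zc m a (k+1) * (((2*k+2)*(2*k+m+1) : ℕ) : ℝ) = 0 := by
  have hden : (((2*k+2)*(2*k+m+1) : ℕ) : ℝ) ≠ 0 := by positivity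
  rw [zc]
  field_simp
  ring

/-- The zonal harmonic polynomial of degree `a`. -/
noncomputable def P (m a : ℕ) : MvPolynomial (Fin (m+2)) ℝ :=
  ∑ k ∈ Finset.range (a/2+1), C (zc m a k) * (X 0 ^ (a-2*k) * S m ^ k)

lemma P_harmonic (a : ℕ) : ∑ j, pderiv j (pderiv j (P m a)) = 0 := by
  unfold P
  rw [lap_sum a (zc m a) (a/2) (by omega)]
  refine Finset.sum_eq_zero fun k _ => ?_
  rw [zc_rec, _root_.map_zero, zero_mul]

lemma P_homog (a : ℕ) : (P m a).IsHomogeneous a := by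
  refine IsHomogeneous.sum _ _ _ fun k hk => ?_
  have hk' : 2*k ≤ a := by
    have := Finset.mem_range.1 hk
    omega
  have h := (((isHomogeneous_X ℝ (0 : Fin (m+2))).pow (a-2*k)).mul (S_homog.pow k)).C_mul
    (zc m a k)
  rwa [show 1*(a-2*k) + 2*k = a from by omega] at h

lemma orth_col {A : Matrix (Fin (m+2)) (Fin (m+2)) ℝ}
    (hAe : A.mulVec (Pi.single 0 1) = Pi.single 0 1) (i : Fin (m+2)) :
    A i 0 = (Pi.single 0 1 : Fin (m+2) → ℝ) i := by
  have := congrFun hAe i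
  simpa [Matrix.mulVec, dotProduct, Pi.single_apply] using this

lemma orth_row {A : Matrix (Fin (m+2)) (Fin (m+2)) ℝ}
    (hA : A ∈ Matrix.orthogonalGroup (Fin (m+2)) ℝ)
    (hAe : A.mulVec (Pi.single 0 1) = Pi.single 0 1) (j : Fin (m+2)) :
    A 0 j = (Pi.single 0 1 : Fin (m+2) → ℝ) j := by
  have h1 := (Matrix.mem_orthogonalGroup_iff' (Fin (m+2)) ℝ).mp hA
  have h2 := congrFun (congrFun h1 0) j
  rw [Matrix.mul_apply] at h2
  have h3 : ∀ k, Aᵀ 0 k * A k j = (Pi.single 0 1 : Fin (m+2) → ℝ) k * A k j := by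
    intro k
    rw [Matrix.transpose_apply, orth_col hAe]
  rw [Finset.sum_congr rfl (fun k _ => h3 k)] at h2
  simp only [Pi.single_apply, ite_mul, one_mul, zero_mul, Finset.sum_ite_eq,
    Finset.sum_ite_eq', Finset.mem_univ, if_true] at h2
  rw [h2]
  simp [Matrix.one_apply, Pi.single_apply, eq_comm]

lemma mulVec_zero_coord {A : Matrix (Fin (m+2)) (Fin (m+2)) ℝ}
    (hA : A ∈ Matrix.orthogonalGroup (Fin (m+2)) ℝ)
    (hAe : A.mulVec (Pi.single 0 1) = Pi.single 0 1) (x : Fin (m+2) → ℝ) :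
    A.mulVec x 0 = x 0 := by
  show dotProduct (A 0) x = x 0
  unfold dotProduct
  rw [Finset.sum_congr rfl (fun k _ => by rw [orth_row hA hAe k])]
  simp [Pi.single_apply]

lemma mulVec_norm {A : Matrix (Fin (m+2)) (Fin (m+2)) ℝ}
    (hA : A ∈ Matrix.orthogonalGroup (Fin (m+2)) ℝ) (x : Fin (m+2) → ℝ) :
    ∑ i, (A.mulVec x i)^2 = ∑ i, (x i)^2 := by
  have h1 := (Matrix.mem_orthogonalGroup_iff' (Fin (m+2)) ℝ).mp hA
  have hT : Aᵀ * A = 1 := by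
    have hstar : star A = Aᵀ := by
      ext i j
      simp [Matrix.star_eq_conjTranspose, Matrix.conjTranspose_apply]
    rw [h1]
  have key : dotProduct (A.mulVec x) (A.mulVec x) = dotProduct x x := by
    rw [Matrix.dotProduct_mulVec, ← Matrix.mulVec_transpose, Matrix.mulVec_mulVec, hT,
      Matrix.one_mulVec]
  simpa [dotProduct, sq] using key

lemma eval_S_mulVec {A : Matrix (Fin (m+2)) (Fin (m+2)) ℝ}
    (hA : A ∈ Matrix.orthogonalGroup (Fin (m+2)) ℝ)
    (hAe : A.mulVec (Pi.single 0 1) = Pi.single 0 1) (x : Fin (m+2) → ℝ) :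
    eval (A.mulVec x) (S m) = eval x (S m) := by
  rw [eval_S', eval_S', mulVec_norm hA, mulVec_zero_coord hA hAe]

lemma eval_P (a : ℕ) (x : Fin (m+2) → ℝ) :
    eval x (P m a) = ∑ k ∈ Finset.range (a/2+1), zc m a k * ((x 0)^(a-2*k) * (eval x (S m))^k) := by
  simp [P]

lemma P_invariant (a : ℕ) {A : Matrix (Fin (m+2)) (Fin (m+2)) ℝ}
    (hA : A ∈ Matrix.orthogonalGroup (Fin (m+2)) ℝ)
    (hAe : A.mulVec (Pi.single 0 1) = Pi.single 0 1) (x : Fin (m+2) → ℝ) :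
    eval (A.mulVec x) (P m a) = eval x (P m a) := by
  rw [eval_P, eval_P, mulVec_zero_coord hA hAe, eval_S_mulVec hA hAe]
section Orth

lemma exists_orth (v w : Fin (m+2) → ℝ) (hn : ∑ i, (v i)^2 = ∑ i, (w i)^2) (h0 : v 0 = w 0) :
    ∃ A ∈ Matrix.orthogonalGroup (Fin (m+2)) ℝ,
      A.mulVec (Pi.single 0 1) = Pi.single 0 1 ∧ A.mulVec v = w := by
  by_cases hvw : v = w
  · exact ⟨1, one_mem _, by rw [Matrix.one_mulVec], by rw [Matrix.one_mulVec, hvw]⟩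
  set u : Fin (m+2) → ℝ := fun i => v i - w i with hu
  set cu : ℝ := ∑ i, (u i)^2 with hcu
  have hcupos : 0 < cu := by
    have hex : ∃ i, u i ≠ 0 := by
      by_contra h
      push_neg at h
      apply hvw
      funext i
      have := h i
      rw [hu] at this
      simp only at this
      linarith
    obtain ⟨i, hi⟩ := hex
    calc (0:ℝ) < u i ^ 2 := by positivity
      _ ≤ cu := Finset.single_le_sum (f := fun i => u i ^ 2) (fun j _ => sq_nonneg _) (mem_univ i)
  set A : Matrix (Fin (m+2)) (Fin (m+2)) ℝ :=
    Matrix.of fun i j => (if i = j then 1 else 0) - (2/cu) * (u i * u j) with hA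
  have hmul : ∀ x : Fin (m+2) → ℝ, A.mulVec x
      = fun i => x i - (2/cu) * ((∑ j, u j * x j) * u i) := by
    intro x
    funext i
    show ∑ j, A i j * x j = _
    have : ∀ j, A i j * x j = (if i = j then x j else 0) - (2/cu) * (u i * (u j * x j)) := by
      intro j
      rw [hA]
      show ((if i = j then (1:ℝ) else 0) - (2/cu) * (u i * u j)) * x j = _
      split_ifs <;> ring
    rw [Finset.sum_congr rfl fun j _ => this j, Finset.sum_sub_distrib, Finset.sum_ite_eq,
      if_pos (mem_univ i), ← Finset.mul_sum, ← Finset.mul_sum]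
    ring
  have hsym : star A = A := by
    ext i j
    simp only [Matrix.star_apply, star_trivial, hA, Matrix.of_apply]
    by_cases h : i = j
    · subst h; ring
    · rw [if_neg (fun hh => h hh.symm), if_neg h]; ring
  have hmem : A ∈ Matrix.orthogonalGroup (Fin (m+2)) ℝ := by
    rw [Matrix.mem_orthogonalGroup_iff']
    rw [← Matrix.conjTranspose_eq_transpose_of_trivial, ← Matrix.star_eq_conjTranspose, hsym]
    ext i j
    rw [Matrix.mul_apply]
    have this1 : ∀ k, A i k * A k j
        = ((if i = k then (1:ℝ) else 0) * (if k = j then 1 else 0))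
          - (2/cu) * ((if i = k then (1:ℝ) else 0) * (u k * u j))
          - (2/cu) * ((if k = j then (1:ℝ) else 0) * (u i * u k))
          + (2/cu * (2/cu) * (u i * u j)) * (u k * u k) := by
      intro k
      show ((if i = k then (1:ℝ) else 0) - (2/cu) * (u i * u k))
          * ((if k = j then (1:ℝ) else 0) - (2/cu) * (u k * u j)) = _
      split_ifs <;> ring
    rw [Finset.sum_congr rfl fun k _ => this1 k]
    rw [Finset.sum_add_distrib, Finset.sum_sub_distrib, Finset.sum_sub_distrib,
      ← Finset.mul_sum, ← Finset.mul_sum, ← Finset.mul_sum]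
    simp only [ite_mul, mul_ite, one_mul, zero_mul, mul_zero, Finset.sum_ite_eq,
      Finset.sum_ite_eq', Finset.mem_univ, if_true]
    have hsq : ∑ k, u k * u k = cu := by
      rw [hcu]
      exact Finset.sum_congr rfl fun k _ => (sq (u k)).symm
    rw [hsq]
    have hcune : cu ≠ 0 := ne_of_gt hcupos
    by_cases h : i = j
    · subst h
      rw [Matrix.one_apply_eq]
      field_simp
      simp
      ring
    · rw [Matrix.one_apply_ne h, if_neg h]
      field_simp
      ring
  have hkey : (∑ j, u j * v j) * 2 = cu := by
    have expand : ∀ i, 2 * (u i * v i) - u i ^ 2 = v i ^ 2 - w i ^ 2 := by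
      intro i
      rw [hu]
      simp only
      ring
    have hs := Finset.sum_congr rfl fun i (_ : i ∈ univ) => expand i
    rw [Finset.sum_sub_distrib, Finset.sum_sub_distrib, ← Finset.mul_sum, hn] at hs
    rw [← hcu] at hs
    linarith
  have hu0 : u 0 = 0 := by rw [hu]; simp only; linarith
  refine ⟨A, hmem, ?_, ?_⟩
  · rw [hmul]
    funext i
    have : ∑ j, u j * (Pi.single 0 1 : Fin (m+2) → ℝ) j = u 0 := by
      rw [Finset.sum_eq_single_of_mem 0 (mem_univ _)]
      · simp
      · intro j _ hj
        simp [Pi.single_apply, hj]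
    rw [this, hu0]
    ring_nf
  · rw [hmul]
    funext i
    rw [show ∑ j, u j * v j = cu / 2 from by linarith [hkey]]
    have hcune : cu ≠ 0 := ne_of_gt hcupos
    have : (2/cu) * (cu/2 * u i) = u i := by field_simp
    rw [this, hu]
    simp only
    ring

/-- The sign flip in coordinate 1. -/
noncomputable def flip (m : ℕ) : Matrix (Fin (m+2)) (Fin (m+2)) ℝ :=
  Matrix.diagonal (fun i => if i = 1 then (-1:ℝ) else 1)

lemma flip_mem : flip m ∈ Matrix.orthogonalGroup (Fin (m+2)) ℝ := by
  rw [Matrix.mem_orthogonalGroup_iff']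
  have hsym : star (flip m) = flip m := by
    ext i j
    show star (flip m j i) = flip m i j
    rw [star_trivial]
    unfold flip
    by_cases h : i = j
    · subst h; rfl
    · rw [Matrix.diagonal_apply_ne' _ h, Matrix.diagonal_apply_ne _ h]
  rw [← Matrix.conjTranspose_eq_transpose_of_trivial, ← Matrix.star_eq_conjTranspose, hsym]
  unfold flip
  rw [Matrix.diagonal_mul_diagonal]
  ext i j
  by_cases h : i = j
  · subst h
    rw [Matrix.diagonal_apply_eq, Matrix.one_apply_eq]
    split_ifs <;> norm_num
  · rw [Matrix.diagonal_apply_ne _ h, Matrix.one_apply_ne h]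

lemma flip_fix : (flip m).mulVec (Pi.single 0 1) = (Pi.single 0 1 : Fin (m+2) → ℝ) := by
  funext i
  unfold flip
  rw [Matrix.mulVec_diagonal]
  by_cases h : i = 0
  · subst h
    have : (0 : Fin (m+2)) ≠ 1 := by simp [Fin.ext_iff]
    simp [this]
  · simp [Pi.single_apply, h]

end Orth
/-- Test vectors with two parameters. -/
def vv (m : ℕ) (t u : ℝ) : Fin (m+2) → ℝ :=
  fun i => if i = 0 then t else if i = 1 then u else 0

lemma vv_zero (t u : ℝ) : vv m t u 0 = t := by simp [vv]

lemma vv_one (t u : ℝ) : vv m t u 1 = u := by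
  have h10 : (1 : Fin (m+2)) ≠ 0 := by simp [Fin.ext_iff]
  simp [vv, h10]

lemma sum_sq_vv (t u : ℝ) : ∑ i, (vv m t u i)^2 = t^2 + u^2 := by
  have h10 : (1 : Fin (m+2)) ≠ 0 := by simp [Fin.ext_iff]
  have h1 : ∑ i ∈ Finset.univ.erase (0 : Fin (m+2)), (vv m t u i)^2 = u^2 := by
    rw [Finset.sum_eq_single_of_mem 1 (Finset.mem_erase.2 ⟨h10, mem_univ _⟩)]
    · rw [vv_one]
    · intro i hi hi1
      have hi0 : i ≠ 0 := (Finset.mem_erase.1 hi).1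
      simp [vv, hi0, hi1]
  rw [← Finset.sum_erase_add _ _ (mem_univ (0 : Fin (m+2))), h1, vv_zero]
  ring

lemma eval_S_vv (t u : ℝ) : eval (vv m t u) (S m) = u^2 := by
  rw [eval_S', sum_sq_vv, vv_zero]
  ring

lemma flip_vv (t u : ℝ) : (flip m).mulVec (vv m t u) = vv m t (-u) := by
  funext i
  unfold flip
  rw [Matrix.mulVec_diagonal]
  by_cases h0 : i = 0
  · subst h0
    have h01 : (0 : Fin (m+2)) ≠ 1 := by simp [Fin.ext_iff]
    simp [vv, h01]
  · by_cases h1 : i = 1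
    · subst h1
      have h10 : (1 : Fin (m+2)) ≠ 0 := by simp [Fin.ext_iff]
      simp [vv, h10]
    · simp [vv, h0, h1]

lemma eval_aeval' {τ₁ τ₂ : Type} (y : τ₂ → ℝ) (f : τ₁ → MvPolynomial τ₂ ℝ)
    (p : MvPolynomial τ₁ ℝ) :
    eval y (aeval f p) = eval (fun i => eval y (f i)) p := by
  rw [aeval_def, eval_eval₂]
  have h : (eval y).comp (algebraMap ℝ (MvPolynomial τ₂ ℝ)) = RingHom.id ℝ := by
    ext r
    simp
  rw [h, eval₂_id]

lemma coeff_scale (w : Fin 2 → ℝ) (p : MvPolynomial (Fin 2) ℝ) (mm : Fin 2 →₀ ℕ) :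
    coeff mm (aeval (fun i => C (w i) * X i) p) = (w 0 ^ mm 0 * w 1 ^ mm 1) * coeff mm p := by
  induction p using MvPolynomial.induction_on' with
  | monomial d r =>
    have hmono : ∀ (c : ℝ), (monomial d) c = C c * (X 0 ^ d 0 * X 1 ^ d 1 :
        MvPolynomial (Fin 2) ℝ) := by
      intro c
      rw [monomial_eq, Finsupp.prod_fintype _ _ (fun i => pow_zero _), Fin.prod_univ_two]
    have hae : aeval (fun i => C (w i) * X i) (monomial d r)
        = C (r * (w 0 ^ d 0 * w 1 ^ d 1)) * (X 0 ^ d 0 * X 1 ^ d 1 :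
          MvPolynomial (Fin 2) ℝ) := by
      rw [aeval_monomial, Finsupp.prod_fintype _ _ (fun i => pow_zero _), Fin.prod_univ_two,
        mul_pow, mul_pow, ← C_pow, ← C_pow, algebraMap_eq, _root_.map_mul, _root_.map_mul]
      ring
    rw [hae, ← hmono, coeff_monomial, coeff_monomial]
    by_cases hdm : d = mm
    · subst hdm
      norm_num
      ring
    · simp [hdm]
  | add p q hp hq =>
    rw [_root_.map_add, coeff_add, coeff_add, hp, hq]
    ring

lemma lin_indep (MM : ℕ) (e : ℕ → ℝ) (f : ℕ → ℕ)
    (h : ∑ k ∈ Finset.range MM, C (e k) * (X 0 ^ (f k) * S m ^ k) = 0) :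
    ∀ k < MM, e k = 0 := by
  intro k0 hk0
  have hev : ∀ s : ℝ, ∑ k ∈ Finset.range MM, e k * (s^2)^k = 0 := by
    intro s
    have hc := congrArg (eval (vv m 1 s)) h
    rw [_root_.map_sum, _root_.map_zero] at hc
    rw [← hc]
    refine Finset.sum_congr rfl fun k _ => ?_
    rw [_root_.map_mul, eval_C, _root_.map_mul, map_pow, map_pow, eval_X, vv_zero, eval_S_vv,
      one_pow, one_mul]
  have hpoly : (∑ k ∈ Finset.range MM, Polynomial.C (e k) * Polynomial.X ^ (2*k) :
      Polynomial ℝ) = 0 := by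
    apply Polynomial.funext
    intro s
    rw [Polynomial.eval_finset_sum]
    simp only [Polynomial.eval_mul, Polynomial.eval_pow, Polynomial.eval_C, Polynomial.eval_X,
      Polynomial.eval_zero]
    rw [show (0:ℝ) = ∑ k ∈ Finset.range MM, e k * (s^2)^k from (hev s).symm]
    refine Finset.sum_congr rfl fun k _ => ?_
    rw [pow_mul]
  have hcoeff := congrArg (fun p => Polynomial.coeff p (2*k0)) hpoly
  simp only [Polynomial.finset_sum_coeff, Polynomial.coeff_C_mul, Polynomial.coeff_X_pow,
    Polynomial.coeff_zero] at hcoeff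
  rw [Finset.sum_eq_single_of_mem k0 (Finset.mem_range.2 hk0)] at hcoeff
  · rw [if_pos rfl, mul_one] at hcoeff
    exact hcoeff
  · intro k _ hkne
    rw [if_neg (by omega), mul_zero]

lemma eq_zero_of_zonal (a : ℕ) (q : MvPolynomial (Fin (m+2)) ℝ)
    (h1 : q.IsHomogeneous a)
    (h2 : ∑ j, pderiv j (pderiv j q) = 0)
    (h3 : ∀ A ∈ Matrix.orthogonalGroup (Fin (m+2)) ℝ,
      A.mulVec (Pi.single 0 1) = Pi.single 0 1 → ∀ x, eval (A.mulVec x) q = eval x q)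
    (h4 : eval (Pi.single 0 1 : Fin (m+2) → ℝ) q = 0) : q = 0 := by
  classical
  have hrad : ∀ x : Fin (m+2) → ℝ,
      eval x q = eval (vv m (x 0) (Real.sqrt (eval x (S m)))) q := by
    intro x
    set r := Real.sqrt (eval x (S m)) with hr
    have hrsq : r^2 = eval x (S m) := Real.sq_sqrt (eval_S_nonneg x)
    have hsum : ∑ i, (x i)^2 = ∑ i, (vv m (x 0) r i)^2 := by
      rw [sum_sq_vv]
      have hS := eval_S' x
      linarith
    obtain ⟨A, hA, hAe, hAv⟩ := exists_orth x (vv m (x 0) r) hsum (vv_zero _ _).symm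
    rw [← hAv, h3 A hA hAe x]
  have heven : ∀ t u : ℝ, eval (vv m t (-u)) q = eval (vv m t u) q := by
    intro t u
    rw [← flip_vv t u]
    exact h3 _ flip_mem flip_fix _
  set σf : Fin (m+2) → MvPolynomial (Fin 2) ℝ :=
    fun i => if i = 0 then X 0 else if i = 1 then X 1 else 0 with hσ
  set G := aeval σf q with hG
  have hGeval : ∀ y : Fin 2 → ℝ, eval y G = eval (vv m (y 0) (y 1)) q := by
    intro y
    rw [hG, eval_aeval']
    have hfeq : (fun i => eval y (σf i)) = vv m (y 0) (y 1) := by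
      funext i
      simp only [hσ]
      unfold vv
      split_ifs <;> simp
    rw [hfeq]
  have hGhom : G.IsHomogeneous a := by
    have hg : ∀ i, (σf i).IsHomogeneous 1 := by
      intro i
      simp only [hσ]
      split_ifs
      · exact isHomogeneous_X _ _
      · exact isHomogeneous_X _ _
      · exact isHomogeneous_zero _ _ _
    have := h1.aeval σf hg
    rwa [one_mul] at this
  have hdeg : ∀ mm : Fin 2 →₀ ℕ, coeff mm G ≠ 0 → mm 0 + mm 1 = a := by
    intro mm hc
    by_contra hne
    apply hc
    apply hGhom.coeff_eq_zero
    have hd : mm.degree = mm 0 + mm 1 := by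
      rw [Finsupp.degree_apply]
      rw [Finset.sum_subset (Finset.subset_univ _)
        (fun i _ hi => Finsupp.notMem_support_iff.mp hi)]
      exact Fin.sum_univ_two mm
    rw [hd]
    exact hne
  have hpar : ∀ mm : Fin 2 →₀ ℕ, coeff mm G ≠ 0 → mm 1 % 2 = 0 := by
    intro mm hc
    by_contra hodd
    set wfun : Fin 2 → ℝ := fun i => if i = 1 then (-1:ℝ) else 1 with hw
    have hw0 : wfun 0 = 1 := by
      simp only [hw]
      norm_num [Fin.ext_iff]
    have hw1 : wfun 1 = -1 := by simp [hw]
    have hflipG : aeval (fun i => C (wfun i) * X i) G = G := by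
      apply MvPolynomial.funext
      intro y
      rw [eval_aeval']
      have hfun : (fun i => eval y (C (wfun i) * X i)) = fun i => wfun i * y i := by
        funext i
        simp
      rw [hfun]
      have e1 : eval (fun i => wfun i * y i) G = eval (vv m (y 0) (-(y 1))) q := by
        rw [hGeval]
        simp only [hw0, hw1, one_mul]
        rw [neg_one_mul]
      rw [e1, heven, hGeval]
    have hcs := coeff_scale wfun G mm
    rw [hflipG, hw0, hw1, one_pow, one_mul] at hcs
    have hneg : (-1:ℝ)^(mm 1) = -1 := Odd.neg_one_pow (Nat.odd_iff.2 (by omega))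
    rw [hneg] at hcs
    apply hc
    linarith
  set dd : ℕ → ℝ :=
    fun k => coeff (Finsupp.single (0 : Fin 2) (a-2*k) + Finsupp.single 1 (2*k)) G with hdd
  have hfs0 : ∀ k, (Finsupp.single (0:Fin 2) (a-2*k) + Finsupp.single 1 (2*k) : Fin 2 →₀ ℕ) 0
      = a-2*k := by
    intro k
    rw [Finsupp.add_apply, Finsupp.single_apply, Finsupp.single_apply]
    norm_num
  have hfs1 : ∀ k, (Finsupp.single (0:Fin 2) (a-2*k) + Finsupp.single 1 (2*k) : Fin 2 →₀ ℕ) 1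
      = 2*k := by
    intro k
    rw [Finsupp.add_apply, Finsupp.single_apply, Finsupp.single_apply]
    norm_num [Fin.ext_iff]
  have hrep : q = ∑ k ∈ Finset.range (a/2+1), C (dd k) * (X 0 ^ (a-2*k) * S m ^ k) := by
    apply MvPolynomial.funext
    intro x
    set r := Real.sqrt (eval x (S m)) with hr
    have hrsq : r^2 = eval x (S m) := Real.sq_sqrt (eval_S_nonneg x)
    have lhs1 : eval x q = eval ![x 0, r] G := by
      have hy := hGeval ![x 0, r]
      simp only [Matrix.cons_val_zero, Matrix.cons_val_one, Matrix.head_cons] at hy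
      rw [hrad x, ← hy, hr]
    have rhs1 : eval x (∑ k ∈ Finset.range (a/2+1), C (dd k) * (X 0 ^ (a-2*k) * S m ^ k))
        = ∑ k ∈ Finset.range (a/2+1), dd k * ((x 0)^(a-2*k) * (eval x (S m))^k) := by
      rw [_root_.map_sum]
      refine Finset.sum_congr rfl fun k _ => ?_
      rw [_root_.map_mul, eval_C, _root_.map_mul, map_pow, map_pow, eval_X]
    rw [lhs1, rhs1, eval_eq' ![x 0, r] G]
    have hterm : ∀ mm : Fin 2 →₀ ℕ, coeff mm G * ∏ i, (![x 0, r] i)^(mm i)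
        = coeff mm G * ((x 0)^(mm 0) * r^(mm 1)) := by
      intro mm
      rw [Fin.prod_univ_two]
      simp only [Matrix.cons_val_zero, Matrix.cons_val_one, Matrix.head_cons]
    rw [Finset.sum_congr rfl fun mm _ => hterm mm]
    set fs : ℕ → (Fin 2 →₀ ℕ) :=
      fun k => Finsupp.single (0:Fin 2) (a-2*k) + Finsupp.single 1 (2*k) with hfs
    have hsub : G.support ⊆ (Finset.range (a/2+1)).image fs := by
      intro mm hmm
      have hc := MvPolynomial.mem_support_iff.mp hmm
      have hd := hdeg mm hc
      have hp := hpar mm hc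
      refine Finset.mem_image.2 ⟨mm 1 / 2, Finset.mem_range.2 (by omega), ?_⟩
      refine Finsupp.ext ?_
      rw [Fin.forall_fin_two, hfs]
      simp only
      exact ⟨by rw [hfs0]; omega, by rw [hfs1]; omega⟩
    rw [Finset.sum_subset hsub (fun mm _ hmm => by
      rw [MvPolynomial.notMem_support_iff.mp hmm, zero_mul])]
    rw [Finset.sum_image (fun k hk k' hk' hkk => by
      have := DFunLike.congr_fun hkk (1 : Fin 2)
      rw [hfs] at this
      simp only at this
      rw [hfs1, hfs1] at this
      omega)]
    refine Finset.sum_congr rfl fun k hk => ?_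
    rw [hfs]
    simp only
    rw [hfs0, hfs1, pow_mul, hrsq, hdd]
  have hlap := lap_sum (m := m) a dd (a/2) (by omega)
  rw [hrep] at h2
  rw [hlap] at h2
  have hcoeffs := lin_indep (a/2)
    (fun k => dd k * (((a-2*k)*((a-2*k)-1) : ℕ) : ℝ) + dd (k+1) * (((2*k+2)*(2*k+m+1) : ℕ) : ℝ))
    (fun k => a-2*k-2) h2
  have hS0 : eval (Pi.single 0 1 : Fin (m+2) → ℝ) (S m) = 0 := by
    rw [eval_S]
    refine Finset.sum_eq_zero fun i hi => ?_
    have hz : (Pi.single 0 1 : Fin (m+2) → ℝ) i = 0 :=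
      Pi.single_eq_of_ne (Finset.ne_of_mem_erase hi) 1
    rw [hz]
    ring
  have hd0 : dd 0 = 0 := by
    have hrew := congrArg (eval (Pi.single 0 1 : Fin (m+2) → ℝ)) hrep
    rw [h4, _root_.map_sum] at hrew
    rw [Finset.sum_eq_single_of_mem 0 (Finset.mem_range.2 (by omega))] at hrew
    · rw [_root_.map_mul, eval_C, _root_.map_mul, map_pow, map_pow, eval_X, hS0] at hrew
      simp only [Pi.single_eq_same, one_pow, pow_zero, mul_one, Nat.mul_zero, Nat.sub_zero]
        at hrew
      linarith
    · intro k _ hkne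
      rw [_root_.map_mul, eval_C, _root_.map_mul, map_pow, map_pow, eval_X, hS0,
        zero_pow hkne, mul_zero, mul_zero]
  have hdall : ∀ k, k ≤ a/2 → dd k = 0 := by
    intro k
    induction k with
    | zero => intro _; exact hd0
    | succ k ih =>
      intro hk1
      have hk : k < a/2 := by omega
      have hE := hcoeffs k hk
      rw [ih (by omega), zero_mul, zero_add] at hE
      have hden : (((2*k+2)*(2*k+m+1) : ℕ) : ℝ) ≠ 0 := by positivity
      exact (mul_eq_zero.mp hE).resolve_right hden
  rw [hrep]
  refine Finset.sum_eq_zero fun k hk => ?_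
  rw [hdall k (by
    have := Finset.mem_range.1 hk
    omega), _root_.map_zero, zero_mul]
lemma eval_P_single (a : ℕ) : eval (Pi.single 0 1 : Fin (m+2) → ℝ) (P m a) = 1 := by
  have hS0 : eval (Pi.single 0 1 : Fin (m+2) → ℝ) (S m) = 0 := by
    rw [eval_S]
    refine Finset.sum_eq_zero fun i hi => ?_
    rw [Pi.single_eq_of_ne (Finset.ne_of_mem_erase hi) 1]
    ring
  rw [eval_P, hS0]
  rw [Finset.sum_eq_single_of_mem 0 (Finset.mem_range.2 (by omega))]
  · rw [Pi.single_eq_same]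
    norm_num [zc]
  · intro k _ hkne
    rw [zero_pow hkne, mul_zero, mul_zero]

end ZonalAux

/-- The space of zonal harmonics of degree `a` (harmonic homogeneous polynomials invariant
under the subgroup of the orthogonal group fixing the first basis vector) is one-dimensional. -/
theorem finrank_zonalHarmonics (n a : ℕ) (hn : 2 ≤ n) :
    Module.finrank ℝ (zonalHarmonics n a (Pi.single (⟨0, by omega⟩ : Fin n) 1)) = 1 := by
  obtain ⟨m, rfl⟩ : ∃ m, n = m + 2 := ⟨n - 2, by omega⟩
  rw [show (⟨0, by omega⟩ : Fin (m+2)) = 0 from by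
    apply Fin.eq_of_val_eq
    simp]
  have hPne : ZonalAux.P m a ≠ 0 := by
    intro h
    have h1 := ZonalAux.eval_P_single (m := m) a
    rw [h, _root_.map_zero] at h1
    exact zero_ne_one h1
  have hZ : zonalHarmonics (m+2) a (Pi.single 0 1) = Submodule.span ℝ {ZonalAux.P m a} := by
    apply le_antisymm
    · intro q hq
      obtain ⟨hq1, hq2, hq3⟩ := hq
      set cc := eval (Pi.single 0 1 : Fin (m+2) → ℝ) q with hcc
      have hsub : q - cc • ZonalAux.P m a = 0 := by
        apply ZonalAux.eq_zero_of_zonal a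
        · have hP : ZonalAux.P m a ∈ homogeneousSubmodule (Fin (m+2)) ℝ a :=
            (mem_homogeneousSubmodule _ _).2 (ZonalAux.P_homog a)
          have hmem : q - cc • ZonalAux.P m a ∈ homogeneousSubmodule (Fin (m+2)) ℝ a :=
            Submodule.sub_mem _ hq1 (Submodule.smul_mem _ cc hP)
          exact (mem_homogeneousSubmodule _ _).1 hmem
        · have hterm : ∀ j : Fin (m+2), pderiv j (pderiv j (q - cc • ZonalAux.P m a))
              = pderiv j (pderiv j q) - cc • pderiv j (pderiv j (ZonalAux.P m a)) := by
            intro j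
            rw [_root_.map_sub, Derivation.map_smul, _root_.map_sub, Derivation.map_smul]
          rw [Finset.sum_congr rfl fun j _ => hterm j, Finset.sum_sub_distrib, hq2,
            ← Finset.smul_sum, ZonalAux.P_harmonic a, smul_zero, sub_zero]
        · intro A hA hAe x
          rw [_root_.map_sub, _root_.map_sub, MvPolynomial.smul_eval, MvPolynomial.smul_eval,
            hq3 A hA hAe x, ZonalAux.P_invariant a hA hAe x]
        · rw [_root_.map_sub, MvPolynomial.smul_eval, ZonalAux.eval_P_single a, mul_one,
            hcc, sub_self]
      have hqP : q = cc • ZonalAux.P m a := sub_eq_zero.mp hsub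
      rw [hqP]
      exact Submodule.smul_mem _ _ (Submodule.mem_span_singleton_self _)
    · rw [Submodule.span_le, Set.singleton_subset_iff]
      exact ⟨(mem_homogeneousSubmodule _ _).2 (ZonalAux.P_homog a), ZonalAux.P_harmonic a,
        fun A hA hAe x => ZonalAux.P_invariant a hA hAe x⟩
  rw [hZ]
  exact finrank_span_singleton hPne
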